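/- For any additive ECA with coefficient vector a and any p ≥ 1, the p-th order lookup table is additive with coefficient vector equal to the p-fold mod-2 convolution of a with itself; in particular for rule 90, the n-th order lookup table is the linear rule with coefficients given by binomial coefficients: φⁿ₉₀(x₋ₙ,...,xₙ) = Σ_{k=0}^{n} C(n,k) x_{2k-n} (mod 2). -/

import Mathlib

/-- p-fold mod-2 convolution power of a coefficient vector `a : ℤ → ZMod 2`
(supported on [-1,1]); `convPow a p` is supported on [-p,p]. -/
noncomputable def convPow (a : ℤ → ZMod 2) : ℕ → ℤ → ZMod 2
  | 0, k => if k = 0 then 1 else 0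
  | p + 1, k => ∑ i ∈ Finset.Icc (-(p : ℤ)) (p : ℤ), convPow a p i * a (k - i)

lemma conv_main (a : ℤ → ZMod 2) (ha : ∀ i : ℤ, 1 < |i| → a i = 0)
    (Φ : (ℤ → ZMod 2) → (ℤ → ZMod 2))
    (hΦ : ∀ x r, Φ x r = ∑ i ∈ Finset.Icc (-1 : ℤ) 1, a i * x (r + i)) :
    ∀ (p : ℕ) (x : ℤ → ZMod 2) (r : ℤ),
      (Φ^[p] x) r = ∑ i ∈ Finset.Icc (-(p : ℤ)) (p : ℤ), convPow a p i * x (r + i) := by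
  intro p
  induction p with
  | zero => intro x r; simp [convPow]
  | succ p ih =>
    intro x r
    rw [Function.iterate_succ_apply', hΦ]
    simp only [ih]
    simp only [convPow, Finset.sum_mul, Finset.mul_sum]
    rw [Finset.sum_comm]
    conv_rhs => rw [Finset.sum_comm]
    refine Finset.sum_congr rfl ?_
    intro i hi
    simp only [Finset.mem_Icc] at hi
    have key : ∑ j ∈ Finset.Icc (-1 : ℤ) 1, a j * (convPow a p i * x (r + j + i))
        = ∑ k ∈ Finset.Icc (i - 1) (i + 1), convPow a p i * a (k - i) * x (r + k) := by
      rw [show Finset.Icc (i - 1) (i + 1) = Finset.map (addLeftEmbedding i) (Finset.Icc (-1 : ℤ) 1) by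
        rw [Finset.map_add_left_Icc]; congr 1 <;> ring]
      rw [Finset.sum_map]
      refine Finset.sum_congr rfl ?_
      intro j _
      simp only [addLeftEmbedding_apply]
      have h1 : i + j - i = j := by ring
      have h2 : r + (i + j) = r + j + i := by ring
      rw [h1, h2]
      ring
    rw [key]
    refine Finset.sum_subset ?_ ?_
    · intro k hk
      simp only [Finset.mem_Icc] at hk ⊢
      push_cast
      omega
    · intro k hk1 hk2
      simp only [Finset.mem_Icc] at hk1 hk2
      have : a (k - i) = 0 := by
        apply ha
        push_cast at hk1
        rcases lt_or_ge (k - i) 0 with h | h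
        · rw [abs_of_neg h]; omega
        · rw [abs_of_nonneg h]; omega
      simp [this]

lemma rule90 : ∀ (n : ℕ) (x : ℤ → ZMod 2) (r : ℤ),
    ((fun y : ℤ → ZMod 2 => fun s => y (s - 1) + y (s + 1))^[n] x) r =
      ∑ k ∈ Finset.range (n + 1), ((Nat.choose n k : ℕ) : ZMod 2) * x (r + 2 * k - n) := by
  intro n
  induction n with
  | zero => intro x r; simp
  | succ n ih =>
    intro x r
    rw [Function.iterate_succ_apply']
    conv_rhs => rw [Finset.sum_range_succ']
    simp only [Nat.choose_succ_succ, Nat.cast_add, add_mul, Finset.sum_add_distrib,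
      Nat.succ_eq_add_one]
    push_cast
    rw [ih, ih]
    have A : ∑ k ∈ Finset.range (n+1), ((n.choose k : ℕ) : ZMod 2) * x (r + 2 * ((k:ℤ) + 1) - ((n:ℤ) + 1))
        = ∑ k ∈ Finset.range (n+1), ((n.choose k : ℕ) : ZMod 2) * x (r + 1 + 2 * k - n) :=
      Finset.sum_congr rfl fun k _ => by congr 1; ring
    have B : ∑ k ∈ Finset.range (n+1), ((n.choose (k+1) : ℕ) : ZMod 2) * x (r + 2 * ((k:ℤ) + 1) - ((n:ℤ) + 1))
        + (((n+1).choose 0 : ℕ) : ZMod 2) * x (r + 0 - ((n:ℤ) + 1))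
        = ∑ k ∈ Finset.range (n+1), ((n.choose k : ℕ) : ZMod 2) * x (r - 1 + 2 * k - n) := by
      have h1 := Finset.sum_range_succ' (fun k : ℕ => ((n.choose k : ℕ) : ZMod 2) * x (r - 1 + 2 * k - n)) (n+1)
      have h2 := Finset.sum_range_succ (fun k : ℕ => ((n.choose k : ℕ) : ZMod 2) * x (r - 1 + 2 * k - n)) (n+1)
      simp only [Nat.choose_succ_self, Nat.cast_zero, zero_mul, add_zero] at h2
      rw [h2] at h1
      rw [h1]
      congr 1
      · exact Finset.sum_congr rfl fun k _ => by push_cast; congr 1; ring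
      · simp only [Nat.choose_zero_right, Nat.cast_one, one_mul, Nat.cast_zero]
        congr 1; push_cast; ring
    conv_rhs => rw [add_assoc, A, B]
    exact add_comm _ _

/-- For an additive ECA the p-th order lookup table is additive with coefficients the
p-fold convolution of `a`; in particular for rule 90 the n-th order lookup table is
the linear rule with mod-2 binomial coefficients. -/
theorem additive_ECA_power_is_convolution (a : ℤ → ZMod 2)
    (ha : ∀ i : ℤ, 1 < |i| → a i = 0)
    (Φ : (ℤ → ZMod 2) → (ℤ → ZMod 2))
    (hΦ : ∀ x r, Φ x r = ∑ i ∈ Finset.Icc (-1 : ℤ) 1, a i * x (r + i))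
    (p : ℕ) (hp : 1 ≤ p) :
    (∀ x r, (Φ^[p] x) r = ∑ i ∈ Finset.Icc (-(p : ℤ)) (p : ℤ), convPow a p i * x (r + i)) ∧
    (∀ (x : ℤ → ZMod 2) (r : ℤ) (n : ℕ),
      ((fun y : ℤ → ZMod 2 => fun s => y (s - 1) + y (s + 1))^[n] x) r =
        ∑ k ∈ Finset.range (n + 1), ((Nat.choose n k : ℕ) : ZMod 2) * x (r + 2 * k - n)) := by
  exact ⟨conv_main a ha Φ hΦ p, fun x r n => rule90 n x r⟩
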